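/- For any integer k ≥ 1, the Shannon entropy (base 2) of the Binomial(k,1/2) distribution is at least (1/2)·log₂(k+1). -/
import Mathlib


open Real Finset

lemma centralBinom_sq_le (t : ℕ) : (2 * t + 1) * (Nat.centralBinom t) ^ 2 ≤ 16 ^ t := by
  induction t with
  | zero => simp [Nat.centralBinom]
  | succ n ih =>
    have h := Nat.succ_mul_centralBinom_succ n
    have hle : (n + 1) ^ 2 * ((2 * (n + 1) + 1) * Nat.centralBinom (n + 1) ^ 2)
        ≤ (n + 1) ^ 2 * 16 ^ (n + 1) := by
      have h2 : ((n + 1) * Nat.centralBinom (n + 1)) ^ 2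
          = (2 * (2 * n + 1)) ^ 2 * Nat.centralBinom n ^ 2 := by
        rw [h]; ring
      calc (n + 1) ^ 2 * ((2 * (n + 1) + 1) * Nat.centralBinom (n + 1) ^ 2)
          = (2 * (n + 1) + 1) * ((n + 1) * Nat.centralBinom (n + 1)) ^ 2 := by ring
        _ = (2 * (n + 1) + 1) * ((2 * (2 * n + 1)) ^ 2 * Nat.centralBinom n ^ 2) := by rw [h2]
        _ = ((2 * n + 3) * (4 * (2 * n + 1))) * ((2 * n + 1) * Nat.centralBinom n ^ 2) := by ring
        _ ≤ ((2 * n + 3) * (4 * (2 * n + 1))) * 16 ^ n :=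
            Nat.mul_le_mul_left _ ih
        _ ≤ (16 * (n + 1) ^ 2) * 16 ^ n := by
            apply Nat.mul_le_mul_right; nlinarith
        _ = (n + 1) ^ 2 * 16 ^ (n + 1) := by ring
    exact Nat.le_of_mul_le_mul_left hle (by positivity)

lemma key_nat (k : ℕ) : (k + 1) * (k.choose (k / 2)) ^ 2 ≤ 4 ^ k := by
  rcases Nat.even_or_odd k with ⟨t, ht⟩ | ⟨t, ht⟩
  · subst ht
    have h2t : t + t = 2 * t := by ring
    rw [h2t, Nat.mul_div_cancel_left _ (by norm_num : 0 < 2)]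
    have := centralBinom_sq_le t
    calc (2 * t + 1) * ((2 * t).choose t) ^ 2 = (2 * t + 1) * (Nat.centralBinom t) ^ 2 := rfl
      _ ≤ 16 ^ t := this
      _ = 4 ^ (2 * t) := by rw [pow_mul]; norm_num
  · subst ht
    have hdiv : (2 * t + 1) / 2 = t := by omega
    rw [hdiv]
    -- centralBinom (t+1) = 2 * choose (2t+1) t
    have hcb : Nat.centralBinom (t + 1) = 2 * (2 * t + 1).choose t := by
      have : 2 * (t + 1) = (2 * t + 1) + 1 := by ring
      rw [Nat.centralBinom, this, Nat.choose_succ_succ, Nat.choose_symm_half]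
      omega
    have := centralBinom_sq_le (t + 1)
    rw [hcb] at this
    have h4 : (2 * (t + 1) + 1) * (2 * (2 * t + 1).choose t) ^ 2
        = (2 * t + 3) * 4 * ((2 * t + 1).choose t) ^ 2 := by ring
    rw [h4] at this
    have h5 : (2 * t + 1 + 1) * ((2 * t + 1).choose t) ^ 2 * 4
        ≤ (2 * t + 3) * 4 * ((2 * t + 1).choose t) ^ 2 := by nlinarith [sq_nonneg ((2 * t + 1).choose t)]
    have h6 : (2 * t + 1 + 1) * ((2 * t + 1).choose t) ^ 2 * 4 ≤ 16 ^ (t + 1) := le_trans h5 this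
    have h7 : 16 ^ (t + 1) = 4 ^ (2 * t + 1) * 4 := by
      have : (16:ℕ) ^ (t+1) = 4 ^ (2 * (t+1)) := by
        rw [show (16:ℕ) = 4^2 by norm_num, ← pow_mul, mul_comm 2 (t+1)]
      rw [this, show 2*(t+1) = (2*t+1)+1 by ring, pow_succ]
    rw [h7] at h6
    exact Nat.le_of_mul_le_mul_right h6 (by norm_num)

/-- Base-2 Shannon entropy of the Binomial(k, 1/2) distribution. -/
noncomputable def binHalfEntropy (k : ℕ) : ℝ :=
  -∑ x ∈ Finset.range (k + 1),
      ((k.choose x : ℝ) / 2 ^ k) * Real.logb 2 ((k.choose x : ℝ) / 2 ^ k)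

theorem binHalfEntropy_ge_half_logb_succ (k : ℕ) (hk : 1 ≤ k) :
    binHalfEntropy k ≥ (1 / 2) * Real.logb 2 (k + 1) := by
  set M : ℝ := (k.choose (k / 2) : ℝ) / 2 ^ k with hM
  have hMpos : 0 < M := by
    apply div_pos
    · exact_mod_cast Nat.choose_pos (Nat.div_le_self k 2)
    · positivity
  have hsum : ∑ x ∈ Finset.range (k + 1), ((k.choose x : ℝ) / 2 ^ k) = 1 := by
    rw [← Finset.sum_div]
    rw [div_eq_one_iff_eq (by positivity)]
    exact_mod_cast Nat.sum_range_choose k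
  have step1 : binHalfEntropy k ≥ -Real.logb 2 M := by
    have : ∑ x ∈ Finset.range (k + 1),
        ((k.choose x : ℝ) / 2 ^ k) * Real.logb 2 ((k.choose x : ℝ) / 2 ^ k)
        ≤ ∑ x ∈ Finset.range (k + 1), ((k.choose x : ℝ) / 2 ^ k) * Real.logb 2 M := by
      apply Finset.sum_le_sum
      intro x hx
      have hxk : x ≤ k := Nat.lt_succ_iff.mp (Finset.mem_range.mp hx)
      have hpos : (0 : ℝ) < (k.choose x : ℝ) / 2 ^ k := by
        apply div_pos
        · exact_mod_cast Nat.choose_pos hxk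
        · positivity
      apply mul_le_mul_of_nonneg_left _ (le_of_lt hpos)
      apply Real.logb_le_logb_of_le (by norm_num) hpos
      apply div_le_div_of_nonneg_right _ (by positivity)
      exact_mod_cast Nat.choose_le_middle x k
    have h2 : ∑ x ∈ Finset.range (k + 1), ((k.choose x : ℝ) / 2 ^ k) * Real.logb 2 M
        = Real.logb 2 M := by
      rw [← Finset.sum_mul, hsum, one_mul]
    unfold binHalfEntropy
    linarith [this, h2.le]
  have step2 : -Real.logb 2 M ≥ (1 / 2) * Real.logb 2 (k + 1) := by
    have hinv : -Real.logb 2 M = Real.logb 2 M⁻¹ := by rw [Real.logb_inv]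
    rw [hinv, ge_iff_le, ← Real.logb_rpow (b := 2) (x := (1/2) * Real.logb 2 (k+1)) (by norm_num) (by norm_num)]
    apply Real.logb_le_logb_of_le (by norm_num)
    · positivity
    · -- 2 ^ ((1/2) * logb 2 (k+1)) = (k+1)^(1/2) ≤ M⁻¹
      have hrw : (2 : ℝ) ^ ((1/2 : ℝ) * Real.logb 2 (k+1)) = ((k:ℝ)+1) ^ (1/2 : ℝ) := by
        rw [mul_comm, Real.rpow_mul (by norm_num), Real.rpow_logb (by positivity) (by norm_num)
          (by positivity)]
      rw [hrw]
      have hMinv : M⁻¹ = (2:ℝ) ^ k / (k.choose (k / 2) : ℝ) := by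
        rw [hM, inv_div]
      rw [hMinv, ← Real.sqrt_eq_rpow]
      have hC : (0:ℝ) < (k.choose (k / 2) : ℝ) := by
        exact_mod_cast Nat.choose_pos (Nat.div_le_self k 2)
      have hkey : ((k:ℝ) + 1) ≤ ((2:ℝ) ^ k / (k.choose (k / 2) : ℝ)) ^ 2 := by
        rw [div_pow, le_div_iff₀ (by positivity)]
        have h1 : ((2:ℝ) ^ k) ^ 2 = (4:ℝ) ^ k := by
          rw [← pow_mul, mul_comm, pow_mul]; norm_num
        rw [h1]
        have := key_nat k
        have h2 : ((k:ℝ) + 1) * ((k.choose (k / 2) : ℝ)) ^ 2 = (((k+1) * (k.choose (k/2))^2 : ℕ) : ℝ) := by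
          push_cast; ring
        rw [h2]
        exact_mod_cast this
      calc Real.sqrt ((k:ℝ)+1) ≤ Real.sqrt (((2:ℝ) ^ k / (k.choose (k / 2) : ℝ)) ^ 2) :=
            Real.sqrt_le_sqrt hkey
        _ = (2:ℝ) ^ k / (k.choose (k / 2) : ℝ) := Real.sqrt_sq (by positivity)
  linarith [step1, step2]
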